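/- Let H_n^a(s) = ∫_0^∞ Ai(y+s)·h_n^a(y) dy for a > 0, s ∈ ℝ. Then for all n ≥ 1, the five-term recurrence (n-1)H_{n-2}^a - (4n-1+as-a³/4)H_{n-1}^a + (6n+3+2as+a³/2)H_n^a - (4n+5+as-a³/4)H_{n+1}^a + (n+2)H_{n+2}^a = 0 holds (with H_{-1}^a interpreted as 0 when n = 1). -/

import Mathlib

open MeasureTheory Set Filter

/-- The Laguerre polynomials, defined by the three-term recurrence
`L_{k+1}(x) = ((2k+1-x)L_k(x) - k L_{k-1}(x))/(k+1)`, `L_0 = 1`, `L_1 = 1 - x`. -/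
noncomputable def laguerre : ℕ → ℝ → ℝ
  | 0, _ => 1
  | 1, x => 1 - x
  | (n + 2), x =>
      ((2 * (n : ℝ) + 3 - x) * laguerre (n + 1) x - ((n : ℝ) + 1) * laguerre n x)
        / ((n : ℝ) + 2)

/-- The scaled Laguerre functions `h_n^a(x) = √a · e^{-ax/2} · L_n(ax)`. -/
noncomputable def scaledLaguerre (a : ℝ) (n : ℕ) (x : ℝ) : ℝ :=
  Real.sqrt a * Real.exp (-a * x / 2) * laguerre n (a * x)

lemma laguerre_zero : ∀ n, laguerre n 0 = 1
  | 0 => by simp [laguerre]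
  | 1 => by simp [laguerre]
  | (n+2) => by
      have h1 := laguerre_zero (n+1)
      have h0 := laguerre_zero n
      have hn : (n:ℝ) + 2 ≠ 0 := by positivity
      simp only [laguerre, h1, h0]
      field_simp
      ring

noncomputable def lagD (n : ℕ) (x : ℝ) : ℝ := -∑ k ∈ Finset.range n, laguerre k x

lemma lagD_succ (k : ℕ) (x : ℝ) : lagD (k+1) x = lagD k x - laguerre k x := by
  simp [lagD, Finset.sum_range_succ]; ring

lemma x_mul_lagD : ∀ n : ℕ, ∀ x : ℝ,
    x * lagD (n+1) x = ((n:ℝ)+1) * (laguerre (n+1) x - laguerre n x)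
  | 0, x => by simp [lagD, laguerre]
  | (n+1), x => by
      have ih := x_mul_lagD n x
      have hn : (n:ℝ) + 2 ≠ 0 := by positivity
      have hrec : laguerre (n+2) x =
          ((2 * (n : ℝ) + 3 - x) * laguerre (n + 1) x - ((n : ℝ) + 1) * laguerre n x)
        / ((n : ℝ) + 2) := by simp [laguerre]
      rw [lagD_succ, hrec]
      push_cast
      field_simp
      linear_combination ((n:ℝ)+2) * ih

lemma hasDerivAt_laguerre : ∀ n : ℕ, ∀ x : ℝ, HasDerivAt (fun t => laguerre n t) (lagD n x) x
  | 0, x => by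
      simp only [laguerre, lagD, Finset.range_zero, Finset.sum_empty, neg_zero]
      exact hasDerivAt_const x 1
  | 1, x => by
      have h : HasDerivAt (fun t : ℝ => 1 - t) (-1) x := by
        simpa using (hasDerivAt_id x).const_sub 1
      have e1 : (fun t => laguerre 1 t) = fun t : ℝ => 1 - t := funext fun t => by simp [laguerre]
      have e2 : lagD 1 x = -1 := by simp [lagD, laguerre]
      rw [e1, e2]; exact h
  | (n+2), x => by
      have ih1 := hasDerivAt_laguerre (n+1) x
      have ih0 := hasDerivAt_laguerre n x
      have hn : (n:ℝ) + 2 ≠ 0 := by positivity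
      have hx : HasDerivAt (fun t : ℝ => 2 * (n:ℝ) + 3 - t) (-1) x := by
        simpa using (hasDerivAt_id x).const_sub (2 * (n:ℝ) + 3)
      have h := (((hx.mul ih1).sub (ih0.const_mul ((n:ℝ)+1))).div_const ((n:ℝ)+2))
      have heq : (fun t => laguerre (n+2) t) =
          fun t => ((2 * (n : ℝ) + 3 - t) * laguerre (n + 1) t - ((n : ℝ) + 1) * laguerre n t)
            / ((n : ℝ) + 2) := by
        funext t; simp [laguerre]
      rw [heq]
      refine h.congr_deriv (Eq.symm ?_)
      have hxid := x_mul_lagD n x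
      have hD := lagD_succ (n+1) x
      have hD0 := lagD_succ n x
      field_simp
      linear_combination ((n:ℝ)+2) * hD + hxid - ((n:ℝ)+1) * hD0

lemma laguerre_x_mul : ∀ k : ℕ, ∀ x : ℝ,
    x * laguerre k x = (2*(k:ℝ)+1) * laguerre k x - ((k:ℝ)+1) * laguerre (k+1) x
      - (k:ℝ) * laguerre (k-1) x
  | 0, x => by simp [laguerre]
  | (j+1), x => by
      have hn : (j:ℝ) + 2 ≠ 0 := by positivity
      have hrec : laguerre (j+2) x =
          ((2 * (j : ℝ) + 3 - x) * laguerre (j + 1) x - ((j : ℝ) + 1) * laguerre j x)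
        / ((j : ℝ) + 2) := by simp [laguerre]
      simp only [Nat.add_sub_cancel, hrec]
      push_cast
      field_simp
      ring

open Polynomial in
noncomputable def lagPoly : ℕ → Polynomial ℝ
  | 0 => 1
  | 1 => 1 - X
  | (n + 2) => Polynomial.C (((n:ℝ)+2)⁻¹) *
      ((Polynomial.C (2*(n:ℝ)+3) - X) * lagPoly (n+1) - Polynomial.C ((n:ℝ)+1) * lagPoly n)

lemma laguerre_eq_eval : ∀ n : ℕ, ∀ x : ℝ, laguerre n x = (lagPoly n).eval x
  | 0, x => by simp [laguerre, lagPoly]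
  | 1, x => by simp [laguerre, lagPoly]
  | (n+2), x => by
      have h1 := laguerre_eq_eval (n+1) x
      have h0 := laguerre_eq_eval n x
      simp [laguerre, lagPoly, h1, h0, div_eq_inv_mul]

lemma tendsto_scaledLaguerre {a : ℝ} (ha : 0 < a) (k : ℕ) :
    Tendsto (fun y => scaledLaguerre a k y) atTop (nhds 0) := by
  have key : Tendsto (fun y : ℝ => ((lagPoly k).comp (Polynomial.C 2 * Polynomial.X)).eval (a*y/2)
      / Real.exp (a*y/2)) atTop (nhds 0) := by
    apply (Polynomial.tendsto_div_exp_atTop _).comp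
    exact Tendsto.atTop_div_const (by norm_num) (tendsto_id.const_mul_atTop ha)
  have : (fun y => scaledLaguerre a k y) = fun y =>
      Real.sqrt a * (((lagPoly k).comp (Polynomial.C 2 * Polynomial.X)).eval (a*y/2)
        / Real.exp (a*y/2)) := by
    funext y
    simp only [scaledLaguerre, laguerre_eq_eval, Polynomial.eval_comp, Polynomial.eval_mul,
      Polynomial.eval_C, Polynomial.eval_X]
    rw [show (2:ℝ) * (a*y/2) = a*y by ring,
      show Real.exp (-a*y/2) = (Real.exp (a*y/2))⁻¹ by rw [← Real.exp_neg]; ring_nf,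
      div_eq_mul_inv]
    ring
  rw [this]
  simpa using key.const_mul (Real.sqrt a)

lemma hasDerivAt_scaledLaguerre (a : ℝ) (k : ℕ) (y : ℝ) :
    HasDerivAt (fun y => scaledLaguerre a k y)
      (Real.sqrt a * Real.exp (-a*y/2) * (a * lagD k (a*y) - a/2 * laguerre k (a*y))) y := by
  have hexp : HasDerivAt (fun y : ℝ => Real.exp (-a*y/2)) (-a/2 * Real.exp (-a*y/2)) y := by
    have h1 : HasDerivAt (fun y : ℝ => -a*y/2) (-a/2) y := by
      simpa using ((hasDerivAt_id y).const_mul (-a)).div_const 2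
    simpa [mul_comm] using h1.exp
  have hlag : HasDerivAt (fun y : ℝ => laguerre k (a*y)) (lagD k (a*y) * a) y := by
    have h1 : HasDerivAt (fun y : ℝ => a*y) a y := by
      simpa using (hasDerivAt_id y).const_mul a
    exact (hasDerivAt_laguerre k (a*y)).comp y h1
  have := (hexp.mul hlag).const_mul (Real.sqrt a)
  have heq : (fun y => scaledLaguerre a k y) =
      fun y => Real.sqrt a * (Real.exp (-a*y/2) * laguerre k (a*y)) := by
    funext t; simp [scaledLaguerre]; ring
  rw [heq]
  refine this.congr_deriv (Eq.symm ?_)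
  ring


/-- let `H_n^a(s) = ∫_0^∞ Ai(y+s)·h_n^a(y) dy`, where `Ai` is the Airy
function of the first kind (`Ai'' (x) = x·Ai(x)`, superexponentially decaying at `+∞`).
Then for all `n ≥ 1` the five-term recurrence
`(n-1)H_{n-2} - (4n-1+as-a³/4)H_{n-1} + (6n+3+2as+a³/2)H_n
  - (4n+5+as-a³/4)H_{n+1} + (n+2)H_{n+2} = 0` holds. -/
theorem airy_scaledLaguerre_recurrence
    (Ai : ℝ → ℝ) (a s : ℝ) (ha : 0 < a)
    (hAi_smooth : ContDiff ℝ 2 Ai)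
    (hAi_ode : ∀ x, deriv (deriv Ai) x = x * Ai x)
    (hAi_decay : ∀ k : ℕ, Tendsto (fun t => |t| ^ k * (|Ai t| + |deriv Ai t|))
      atTop (nhds 0))
    (H : ℕ → ℝ)
    (hH : ∀ n, H n = ∫ y in Ici (0:ℝ), Ai (y + s) * scaledLaguerre a n y)
    (hH_int : ∀ n, IntegrableOn (fun y => Ai (y + s) * scaledLaguerre a n y) (Ici 0)) :
    ∀ n : ℕ, 1 ≤ n →
      ((n : ℝ) - 1) * H (n - 2)
        - (4 * (n : ℝ) - 1 + a * s - a ^ 3 / 4) * H (n - 1)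
        + (6 * (n : ℝ) + 3 + 2 * a * s + a ^ 3 / 2) * H n
        - (4 * (n : ℝ) + 5 + a * s - a ^ 3 / 4) * H (n + 1)
        + ((n : ℝ) + 2) * H (n + 2) = 0 := by
  intro n hn
  obtain ⟨p, rfl⟩ : ∃ p, n = p + 1 := ⟨n - 1, (Nat.succ_pred_eq_of_pos hn).symm⟩
  have ha' : a ≠ 0 := ne_of_gt ha
  -- differentiability facts about Ai
  have hAi2 : ContDiff ℝ ((1 : WithTop ℕ∞) + 1) Ai := by
    exact hAi_smooth
  have hAi_diff : Differentiable ℝ Ai := hAi2.differentiable (by norm_num)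
  have hdAi_diff : Differentiable ℝ (deriv Ai) := by
    have := (contDiff_succ_iff_deriv.mp hAi2).2.2
    exact this.differentiable (by norm_num)
  have hAiD : ∀ y : ℝ, HasDerivAt (fun y => Ai (y + s)) (deriv Ai (y + s)) y := by
    intro y
    simpa [Function.comp_def] using ((hAi_diff.differentiableAt).hasDerivAt.comp y ((hasDerivAt_id y).add_const s))
  have hdAiD : ∀ y : ℝ, HasDerivAt (fun y => deriv Ai (y + s)) ((y + s) * Ai (y + s)) y := by
    intro y
    have h := ((hdAi_diff.differentiableAt).hasDerivAt.comp y ((hasDerivAt_id y).add_const s))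
    simpa [hAi_ode, Function.comp_def] using h
  -- integrals
  have hInt : ∀ j, IntegrableOn (fun y => Ai (y+s) * scaledLaguerre a j y) (Ioi 0) :=
    fun j => (hH_int j).mono_set Ioi_subset_Ici_self
  have hHIoi : ∀ j, H j = ∫ y in Ioi (0:ℝ), Ai (y+s) * scaledLaguerre a j y := fun j => by
    rw [hH j, integral_Ici_eq_integral_Ioi]
  -- the test function ψ and its derivatives
  set ψ : ℝ → ℝ := fun y =>
    scaledLaguerre a (p+2) y - 2 * scaledLaguerre a (p+1) y + scaledLaguerre a p y with hψdef
  set χ : ℝ → ℝ := fun y =>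
    -(a/2) * (scaledLaguerre a (p+2) y - scaledLaguerre a p y) with hχdef
  have hψD : ∀ y : ℝ, HasDerivAt ψ (χ y) y := by
    intro y
    have h2 := hasDerivAt_scaledLaguerre a (p+2) y
    have h1 := hasDerivAt_scaledLaguerre a (p+1) y
    have h0 := hasDerivAt_scaledLaguerre a p y
    have h := (h2.sub (h1.const_mul 2)).add h0
    refine h.congr_deriv (Eq.symm ?_)
    have d2 := lagD_succ (p+1) (a*y)
    have d1 := lagD_succ p (a*y)
    simp only [hχdef, scaledLaguerre]
    linear_combination (-(Real.sqrt a * Real.exp (-a*y/2) * a)) * d2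
      + (Real.sqrt a * Real.exp (-a*y/2) * a) * d1
  have hχD : ∀ y : ℝ, HasDerivAt χ
      ((a^2/4) * (scaledLaguerre a (p+2) y + 2 * scaledLaguerre a (p+1) y
        + scaledLaguerre a p y)) y := by
    intro y
    have h2 := hasDerivAt_scaledLaguerre a (p+2) y
    have h0 := hasDerivAt_scaledLaguerre a p y
    have h := (h2.sub h0).const_mul (-(a/2))
    refine h.congr_deriv (Eq.symm ?_)
    have d2 := lagD_succ (p+1) (a*y)
    have d1 := lagD_succ p (a*y)
    simp only [scaledLaguerre]
    linear_combination (a^2/2 * Real.sqrt a * Real.exp (-a*y/2)) * d2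
      + (a^2/2 * Real.sqrt a * Real.exp (-a*y/2)) * d1
  -- the function F whose derivative we integrate
  set F : ℝ → ℝ := fun y => Ai (y+s) * χ y - deriv Ai (y+s) * ψ y with hFdef
  set F' : ℝ → ℝ := fun y =>
    Ai (y+s) * ((a^2/4) * (scaledLaguerre a (p+2) y + 2 * scaledLaguerre a (p+1) y
        + scaledLaguerre a p y)) - (y+s) * Ai (y+s) * ψ y with hF'def
  have hFD : ∀ y : ℝ, HasDerivAt F (F' y) y := by
    intro y
    have h := ((hAiD y).mul (hχD y)).sub ((hdAiD y).mul (hψD y))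
    refine h.congr_deriv (Eq.symm ?_)
    simp only [hF'def, hχdef, hψdef]
    ring
  have hF0 : F 0 = 0 := by
    have h1 : ψ 0 = 0 := by simp [hψdef, scaledLaguerre, laguerre_zero]; ring
    have h2 : χ 0 = 0 := by simp [hχdef, scaledLaguerre, laguerre_zero]
    simp [hFdef, h1, h2]
  -- tendsto F at top
  have hA0 : Tendsto Ai atTop (nhds 0) := by
    refine squeeze_zero_norm (fun t => ?_) (by simpa using hAi_decay 0)
    simp only [Real.norm_eq_abs]
    exact le_add_of_nonneg_right (abs_nonneg _)
  have hdA0 : Tendsto (deriv Ai) atTop (nhds 0) := by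
    refine squeeze_zero_norm (fun t => ?_) (by simpa using hAi_decay 0)
    simp only [Real.norm_eq_abs]
    exact le_add_of_nonneg_left (abs_nonneg _)
  have hshift : Tendsto (fun y : ℝ => y + s) atTop atTop := tendsto_atTop_add_const_right _ s tendsto_id
  have hsl : ∀ j, Tendsto (fun y => scaledLaguerre a j y) atTop (nhds 0) :=
    fun j => tendsto_scaledLaguerre ha j
  have hFtend : Tendsto F atTop (nhds 0) := by
    have h1 : Tendsto (fun y => Ai (y+s) * χ y) atTop (nhds 0) := by
      have := (hA0.comp hshift).mul (((hsl (p+2)).sub (hsl p)).const_mul (-(a/2)))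
      simpa [hχdef, Function.comp] using this
    have h2 : Tendsto (fun y => deriv Ai (y+s) * ψ y) atTop (nhds 0) := by
      have := (hdA0.comp hshift).mul (((hsl (p+2)).sub ((hsl (p+1)).const_mul 2)).add (hsl p))
      simpa [hψdef, Function.comp] using this
    simpa [hFdef] using h1.sub h2
  -- the 5-term combination G = a * F'
  set G : ℝ → ℝ := fun y =>
      ((p:ℝ)+3) * (Ai (y+s) * scaledLaguerre a (p+3) y)
      + ((a^3/4 - a*s - (4*(p:ℝ)+9)) * (Ai (y+s) * scaledLaguerre a (p+2) y)
      + ((a^3/2 + 2*a*s + (6*(p:ℝ)+9)) * (Ai (y+s) * scaledLaguerre a (p+1) y)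
      + ((a^3/4 - a*s - (4*(p:ℝ)+3)) * (Ai (y+s) * scaledLaguerre a p y)
      + (p:ℝ) * (Ai (y+s) * scaledLaguerre a (p-1) y)))) with hGdef
  have hpt : ∀ y : ℝ, a * F' y = G y := by
    intro y
    have k2 := laguerre_x_mul (p+2) (a*y)
    have k1 := laguerre_x_mul (p+1) (a*y)
    have k0 := laguerre_x_mul p (a*y)
    simp only [show p+2-1 = p+1 from rfl, show p+1-1 = p from rfl] at k2 k1
    simp only [hGdef, hF'def, hψdef, scaledLaguerre]
    push_cast at k2 k1 k0 ⊢
    linear_combination (-(Real.sqrt a * Real.exp (-a*y/2) * Ai (y+s))) * k2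
      + (2*(Real.sqrt a * Real.exp (-a*y/2) * Ai (y+s))) * k1
      + (-(Real.sqrt a * Real.exp (-a*y/2) * Ai (y+s))) * k0
  have hGint : IntegrableOn G (Ioi 0) :=
    ((hInt (p+3)).const_mul _).add (((hInt (p+2)).const_mul _).add
      (((hInt (p+1)).const_mul _).add (((hInt p).const_mul _).add
        ((hInt (p-1)).const_mul _))))
  have hF'int : IntegrableOn F' (Ioi 0) := by
    have heq : F' = fun y => a⁻¹ * G y := by
      funext y
      rw [← hpt y]
      field_simp
    rw [heq]
    exact hGint.const_mul _
  have hFTC : ∫ y in Ioi (0:ℝ), F' y = 0 - F 0 :=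
    integral_Ioi_of_hasDerivAt_of_tendsto' (fun x _ => hFD x) hF'int hFtend
  rw [hF0, sub_zero] at hFTC
  have hG0 : ∫ y in Ioi (0:ℝ), G y = 0 := by
    have heq : ∀ y, G y = a * F' y := fun y => (hpt y).symm
    calc ∫ y in Ioi (0:ℝ), G y = ∫ y in Ioi (0:ℝ), a * F' y := by simp_rw [heq]
    _ = a * ∫ y in Ioi (0:ℝ), F' y := integral_const_mul a _
    _ = 0 := by rw [hFTC, mul_zero]
  have hGsum : ∫ y in Ioi (0:ℝ), G y =
      ((p:ℝ)+3) * H (p+3)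
      + ((a^3/4 - a*s - (4*(p:ℝ)+9)) * H (p+2)
      + ((a^3/2 + 2*a*s + (6*(p:ℝ)+9)) * H (p+1)
      + ((a^3/4 - a*s - (4*(p:ℝ)+3)) * H p
      + (p:ℝ) * H (p-1)))) := by
    have hlast : ∀ (c : ℝ) (j : ℕ),
        (∫ y in Ioi (0:ℝ), c * (Ai (y+s) * scaledLaguerre a j y)) = c * H j := by
      intro c j
      rw [integral_const_mul, hHIoi j]
    have s1 : (∫ y in Ioi (0:ℝ), (((p:ℝ)+3) * (Ai (y+s) * scaledLaguerre a (p+3) y) + ((a^3/4 - a*s - (4*(p:ℝ)+9)) * (Ai (y+s) * scaledLaguerre a (p+2) y) + ((a^3/2 + 2*a*s + (6*(p:ℝ)+9)) * (Ai (y+s) * scaledLaguerre a (p+1) y) + ((a^3/4 - a*s - (4*(p:ℝ)+3)) * (Ai (y+s) * scaledLaguerre a (p) y) + (p:ℝ) * (Ai (y+s) * scaledLaguerre a (p-1) y)))))) =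
        (∫ y in Ioi (0:ℝ), ((p:ℝ)+3) * (Ai (y+s) * scaledLaguerre a (p+3) y)) + (∫ y in Ioi (0:ℝ), ((a^3/4 - a*s - (4*(p:ℝ)+9)) * (Ai (y+s) * scaledLaguerre a (p+2) y) + ((a^3/2 + 2*a*s + (6*(p:ℝ)+9)) * (Ai (y+s) * scaledLaguerre a (p+1) y) + ((a^3/4 - a*s - (4*(p:ℝ)+3)) * (Ai (y+s) * scaledLaguerre a (p) y) + (p:ℝ) * (Ai (y+s) * scaledLaguerre a (p-1) y))))) :=
      integral_add ((hInt (p+3)).const_mul _) (((hInt (p+2)).const_mul _).add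
        (((hInt (p+1)).const_mul _).add (((hInt p).const_mul _).add ((hInt (p-1)).const_mul _))))
    have s2 : (∫ y in Ioi (0:ℝ), ((a^3/4 - a*s - (4*(p:ℝ)+9)) * (Ai (y+s) * scaledLaguerre a (p+2) y) + ((a^3/2 + 2*a*s + (6*(p:ℝ)+9)) * (Ai (y+s) * scaledLaguerre a (p+1) y) + ((a^3/4 - a*s - (4*(p:ℝ)+3)) * (Ai (y+s) * scaledLaguerre a (p) y) + (p:ℝ) * (Ai (y+s) * scaledLaguerre a (p-1) y))))) =
        (∫ y in Ioi (0:ℝ), (a^3/4 - a*s - (4*(p:ℝ)+9)) * (Ai (y+s) * scaledLaguerre a (p+2) y)) + (∫ y in Ioi (0:ℝ), ((a^3/2 + 2*a*s + (6*(p:ℝ)+9)) * (Ai (y+s) * scaledLaguerre a (p+1) y) + ((a^3/4 - a*s - (4*(p:ℝ)+3)) * (Ai (y+s) * scaledLaguerre a (p) y) + (p:ℝ) * (Ai (y+s) * scaledLaguerre a (p-1) y)))) :=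
      integral_add ((hInt (p+2)).const_mul _) (((hInt (p+1)).const_mul _).add
        (((hInt p).const_mul _).add ((hInt (p-1)).const_mul _)))
    have s3 : (∫ y in Ioi (0:ℝ), ((a^3/2 + 2*a*s + (6*(p:ℝ)+9)) * (Ai (y+s) * scaledLaguerre a (p+1) y) + ((a^3/4 - a*s - (4*(p:ℝ)+3)) * (Ai (y+s) * scaledLaguerre a (p) y) + (p:ℝ) * (Ai (y+s) * scaledLaguerre a (p-1) y)))) =
        (∫ y in Ioi (0:ℝ), (a^3/2 + 2*a*s + (6*(p:ℝ)+9)) * (Ai (y+s) * scaledLaguerre a (p+1) y)) + (∫ y in Ioi (0:ℝ), ((a^3/4 - a*s - (4*(p:ℝ)+3)) * (Ai (y+s) * scaledLaguerre a (p) y) + (p:ℝ) * (Ai (y+s) * scaledLaguerre a (p-1) y))) :=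
      integral_add ((hInt (p+1)).const_mul _) (((hInt p).const_mul _).add ((hInt (p-1)).const_mul _))
    have s4 : (∫ y in Ioi (0:ℝ), ((a^3/4 - a*s - (4*(p:ℝ)+3)) * (Ai (y+s) * scaledLaguerre a (p) y) + (p:ℝ) * (Ai (y+s) * scaledLaguerre a (p-1) y))) = (∫ y in Ioi (0:ℝ), (a^3/4 - a*s - (4*(p:ℝ)+3)) * (Ai (y+s) * scaledLaguerre a (p) y)) + (∫ y in Ioi (0:ℝ), (p:ℝ) * (Ai (y+s) * scaledLaguerre a (p-1) y)) :=
      integral_add ((hInt p).const_mul _) ((hInt (p-1)).const_mul _)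
    rw [hGdef]
    simp only []
    rw [s1, s2, s3, s4, hlast _ (p+3), hlast _ (p+2), hlast _ (p+1), hlast _ p, hlast _ (p-1)]
  rw [hGsum] at hG0
  simp only [show p+1-2 = p-1 from rfl, show p+1-1 = p from rfl,
    show p+1+1 = p+2 from rfl, show p+1+2 = p+3 from rfl]
  push_cast
  linear_combination hG0
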